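/- arXiv:1812.02480 — 3 statements merged into one kernel-verified Lean document; each statement's English description precedes it below -/
import Mathlib

section
/- Let γ : [0,1] → T be a loop at 1⁻ and n ∈ ℕ. If δ_{n+1} : [0,∞) → T is continuous with δ_{n+1}(0) = 1⁻ and f^{n+1} ∘ δ_{n+1} = γ*, and δ_n : [0,∞) → T is continuous with δ_n(0) = 1⁻ and f^n ∘ δ_n = γ*, then f ∘ δ_{n+1} = δ_n. -/
open scoped Real NNReal

/-- The exponential covering map `e : ℝ → S¹`, `e t = exp (2 π i t)`. -/
noncomputable def eMap (t : ℝ) : Circle := Circle.exp (2 * Real.pi * t)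

/-- The `r`-torus `T = (S¹)^r`. -/
abbrev Torus (r : ℕ) := Fin r → Circle

/-- The point `1⁻ = (1,…,1)` of the torus. -/
noncomputable def onePt (r : ℕ) : Torus r := fun _ => 1

/-- The map `f(z₁,…,z_r) = (z₁^{m₁},…,z_r^{m_r})` on the torus. -/
noncomputable def fPow {r : ℕ} (m : Fin r → ℕ) (z : Torus r) : Torus r := fun i => z i ^ m i

/-- `γ* : [0,∞) → T`, defined by `γ*(t) = γ(t-k+1)` for `t ∈ [k-1,k]`. -/
noncomputable def loopExt {r : ℕ} (γ : Path (onePt r) (onePt r)) (t : ℝ≥0) : Torus r :=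
  γ ⟨Int.fract (t : ℝ), (Int.fract_nonneg _), (Int.fract_lt_one _).le⟩

/-- The standard loop `λ_s(t) = e(st)` in the circle. -/
noncomputable def lam (s : ℤ) : Path (1 : Circle) 1 where
  toFun t := eMap (s * t)
  continuous_toFun := by
    exact Circle.exp.continuous.comp (by fun_prop)
  source' := by simp [eMap]
  target' := by
    simp only [eMap, Set.Icc.coe_one, mul_one]
    rw [show (2 * Real.pi * (s:ℝ)) = (s:ℝ) * (2 * Real.pi) by ring]
    exact Circle.exp_int_mul_two_pi s

/-- The `m`-adic solenoid, as the inverse limit of circles under `z ↦ z^m`. -/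
def Solenoid (m : ℕ) : Type := {x : ℕ → Circle // ∀ n, (x (n + 1)) ^ m = x n}

noncomputable instance (m : ℕ) : TopologicalSpace (Solenoid m) :=
  instTopologicalSpaceSubtype

/-- The product `Σ = Σ_{m₁} × ⋯ × Σ_{m_r}` identified with the inverse limit of `(T, f)`. -/
def SigmaProd {r : ℕ} (m : Fin r → ℕ) : Type :=
  {x : ℕ → Torus r // ∀ n, fPow m (x (n + 1)) = x n}

noncomputable instance {r : ℕ} (m : Fin r → ℕ) : TopologicalSpace (SigmaProd m) :=
  instTopologicalSpaceSubtype

/-- The `n`-th coordinate projection `π_n : Σ → T`. -/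
def piProj {r : ℕ} (m : Fin r → ℕ) (n : ℕ) (x : SigmaProd m) : Torus r := x.1 n

/-- The projection `η_i : Σ → Σ_{m_i}`. -/
def eta {r : ℕ} (m : Fin r → ℕ) (i : Fin r) (x : SigmaProd m) : Solenoid (m i) :=
  ⟨fun n => x.1 n i, fun n => congrFun (x.2 n) i⟩

/-- The point `p₀ = (1⁻, 1⁻, …) ∈ Σ`. -/
noncomputable def basePt {r : ℕ} (m : Fin r → ℕ) : SigmaProd m :=
  ⟨fun _ => onePt r, fun _ => funext fun _ => one_pow _⟩


/-- The set of `M`-th roots of unity in the circle is finite. -/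
lemma finite_pow_eq_one (M : ℕ) (hM : 0 < M) : Finite {z : Circle // z ^ M = 1} := by
  have hfin' : Set.Finite {z : Circle | z ^ M = 1} := by
    have h : {z : Circle | z ^ M = 1} ⊆ (fun z : Circle => (z : ℂ)) ⁻¹' {x : ℂ | x ^ M = 1} := by
      intro z hz
      simp only [Set.mem_preimage, Set.mem_setOf_eq]
      have := congrArg (fun w : Circle => (w : ℂ)) hz.out
      push_cast at this
      exact this
    have hfin : ({x : ℂ | x ^ M = 1}).Finite := by
      have hp : (Polynomial.X ^ M - 1 : Polynomial ℂ) ≠ 0 := by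
        intro h
        have := congrArg (Polynomial.coeff · M) h
        simp [Polynomial.coeff_X_pow, Polynomial.coeff_one, hM.ne'] at this
      refine (Polynomial.finite_setOf_isRoot hp).subset ?_
      intro x hx
      simp [Polynomial.IsRoot, sub_eq_zero, hx.out]
    exact (hfin.preimage (fun a _ b _ h => Subtype.ext h)).subset h
  exact hfin'.to_subtype

/-- Iterates of `fPow` raise each coordinate to the corresponding power. -/
lemma fPow_iterate {r : ℕ} (m : Fin r → ℕ) (k : ℕ) (z : Torus r) (i : Fin r) :
    ((fPow m)^[k] z) i = z i ^ (m i ^ k) := by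
  induction k generalizing z with
  | zero => simp
  | succ k ih =>
    rw [Function.iterate_succ_apply]
    rw [ih (fPow m z)]
    show (z i ^ m i) ^ m i ^ k = z i ^ m i ^ (k + 1)
    rw [← pow_mul, ← pow_succ']

/-- **Lemma 2(d).** `f ∘ γ^{(n+1)} = γ^{(n)}` for the lifts of `γ*` through `f^{n+1}`
and `f^n` starting at `1⁻`. -/
theorem f_comp_lift_succ {r : ℕ} (hr : 0 < r) (m : Fin r → ℕ) (hm : ∀ i, 2 ≤ m i)
    (hcop : ∀ i j, i ≠ j → Nat.Coprime (m i) (m j))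
    (γ : Path (onePt r) (onePt r)) (n : ℕ)
    (δ₁ δ₀ : ℝ≥0 → Torus r) (hδ₁ : Continuous δ₁) (hδ₀ : Continuous δ₀)
    (h₁0 : δ₁ 0 = onePt r) (h₀0 : δ₀ 0 = onePt r)
    (h₁ : ∀ t, (fPow m)^[n + 1] (δ₁ t) = loopExt γ t)
    (h₀ : ∀ t, (fPow m)^[n] (δ₀ t) = loopExt γ t) :
    fPow m ∘ δ₁ = δ₀ := by

  funext t
  funext i
  have hMpos : 0 < m i ^ n := Nat.pow_pos (lt_of_lt_of_le two_pos (hm i))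
  have key : ∀ s : ℝ≥0, ((δ₁ s i) ^ m i * (δ₀ s i)⁻¹) ^ (m i ^ n) = 1 := by
    intro s
    have h1 := congrFun (h₁ s) i
    have h0 := congrFun (h₀ s) i
    rw [fPow_iterate] at h1 h0
    have heq : (δ₁ s i ^ m i) ^ (m i ^ n) = δ₀ s i ^ (m i ^ n) := by
      rw [← pow_mul, ← pow_succ', h1, h0]
    rw [mul_pow, inv_pow, heq, mul_inv_cancel]
  haveI : Finite {z : Circle // z ^ (m i ^ n) = 1} := finite_pow_eq_one _ hMpos
  let g : ℝ≥0 → {z : Circle // z ^ (m i ^ n) = 1} := fun s => ⟨_, key s⟩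
  have hg : Continuous g := by
    refine Continuous.subtype_mk ?_ _
    exact (((continuous_apply i).comp hδ₁).pow _).mul ((continuous_apply i).comp hδ₀).inv
  have hconst : g t = g 0 := PreconnectedSpace.constant inferInstance hg
  have h0 : (g 0 : Circle) = 1 := by
    show (δ₁ 0 i) ^ m i * (δ₀ 0 i)⁻¹ = 1
    rw [h₁0, h₀0]
    simp [onePt]
  have ht : (δ₁ t i) ^ m i * (δ₀ t i)⁻¹ = 1 := by
    have := congrArg Subtype.val hconst
    rw [h0] at this
    exact this
  show (δ₁ t i) ^ m i = δ₀ t i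
  rwa [mul_inv_eq_one] at ht
end

section
/- Let k₁,…,k_r ∈ ℕ with each k_i ≥ 1, let g : T → T be g(z₁,…,z_r) = (z₁^{k₁},…,z_r^{k_r}), let γ : [0,1] → T be a loop at 1⁻, and let δ : [0,∞) → T be continuous with δ(0) = 1⁻ and g ∘ δ = γ*. Then the image of δ is a compact connected subset of T. -/
open scoped Real NNReal

/-- **Property (c).** The image of the lift of `γ*` through
`g(z₁,…,z_r) = (z₁^{k₁},…,z_r^{k_r})` is a compact connected subset of the torus. -/
theorem lift_image_compact_connected {r : ℕ} (hr : 0 < r) (k : Fin r → ℕ)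
    (hk : ∀ i, 1 ≤ k i) (γ : Path (onePt r) (onePt r))
    (δ : ℝ≥0 → Torus r) (hδ : Continuous δ) (hδ0 : δ 0 = onePt r)
    (hlift : ∀ t, fPow k (δ t) = loopExt γ t) :
    IsCompact (Set.range δ) ∧ IsConnected (Set.range δ) := by
  classical
  -- `loopExt` is periodic with period 1
  have hper : ∀ t : ℝ≥0, loopExt γ (t + 1) = loopExt γ t := by
    intro t
    unfold loopExt
    congr 1
    apply Subtype.ext
    show Int.fract ((t + 1 : ℝ≥0) : ℝ) = Int.fract (t : ℝ)
    push_cast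
    exact Int.fract_add_one _
  set N : ℕ := ∏ i, k i with hN
  have hkN : ∀ i, k i ∣ N := fun i => Finset.dvd_prod_of_mem k (Finset.mem_univ i)
  have hN1 : 1 ≤ N := Finset.one_le_prod' (fun i _ => hk i)
  -- each coordinate shift quotient is a root of unity
  have hmem : ∀ (i : Fin r) (t : ℝ≥0), (δ (t + 1) i * (δ t i)⁻¹) ^ k i = 1 := by
    intro i t
    have h1 : (δ (t + 1) i) ^ k i = loopExt γ (t + 1) i := congrFun (hlift (t + 1)) i
    have h2 : (δ t i) ^ k i = loopExt γ t i := congrFun (hlift t) i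
    rw [mul_pow, inv_pow, h1, h2, hper t, mul_inv_cancel]
  -- the quotient is constant in `t`
  have key : ∀ (i : Fin r) (t : ℝ≥0),
      δ (t + 1) i * (δ t i)⁻¹ = δ 1 i * (δ 0 i)⁻¹ := by
    intro i t
    have hfinC : {w : ℂ | w ^ k i = 1}.Finite := by
      apply Set.Finite.subset (Polynomial.nthRoots (k i) (1 : ℂ)).toFinset.finite_toSet
      intro w hw
      simp only [Multiset.mem_toFinset, Multiset.mem_coe, Finset.mem_coe]
      rw [Polynomial.mem_nthRoots (hk i)]
      exact hw
    have hfin : {z : Circle | z ^ k i = 1}.Finite := by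
      have : {z : Circle | z ^ k i = 1} ⊆ (fun z : Circle => (z : ℂ)) ⁻¹' {w : ℂ | w ^ k i = 1} := by
        intro z hz
        simp only [Set.mem_preimage, Set.mem_setOf_eq]
        have h1 := congrArg Circle.coeHom hz
        rwa [map_pow, map_one] at h1
      exact Set.Finite.subset (hfinC.preimage (Subtype.coe_injective.injOn)) this
    haveI : Finite ({z : Circle | z ^ k i = 1} : Set Circle) := hfin.to_subtype
    have hcont : Continuous (fun t : ℝ≥0 => δ (t + 1) i * (δ t i)⁻¹) := by
      have h1 : Continuous (fun t : ℝ≥0 => δ (t + 1) i) :=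
        (continuous_apply i).comp (hδ.comp (by fun_prop))
      have h2 : Continuous (fun t : ℝ≥0 => δ t i) := (continuous_apply i).comp hδ
      exact h1.mul h2.inv
    have hmt : Set.MapsTo (fun t : ℝ≥0 => δ (t + 1) i * (δ t i)⁻¹) Set.univ
        {z : Circle | z ^ k i = 1} := fun t _ => hmem i t
    have h0 := isPreconnected_univ.constant_of_mapsTo (isDiscrete_iff_discreteTopology.mpr inferInstance) (hcont.continuousOn) hmt
      (Set.mem_univ t) (Set.mem_univ 0)
    simpa using h0
  -- the constant `c`
  set c : Fin r → Circle := fun i => δ 1 i * (δ 0 i)⁻¹ with hc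
  have hshift : ∀ (t : ℝ≥0) (i : Fin r), δ (t + 1) i = c i * δ t i := by
    intro t i
    show δ (t + 1) i = (δ 1 i * (δ 0 i)⁻¹) * δ t i
    rw [← key i t]
    exact (inv_mul_cancel_right _ _).symm
  have hcN : ∀ i, (c i) ^ N = 1 := by
    intro i
    obtain ⟨d, hd⟩ := hkN i
    have h0 : (c i) ^ k i = 1 := by
      have := hmem i 0
      simpa [hc] using this
    rw [hd, pow_mul, h0, one_pow]
  -- iterate the shift
  have hiter : ∀ (n : ℕ) (t : ℝ≥0) (i : Fin r), δ (t + n) i = (c i) ^ n * δ t i := by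
    intro n
    induction n with
    | zero => intro t i; simp
    | succ n ih =>
      intro t i
      have : (t + (n + 1 : ℕ) : ℝ≥0) = (t + n) + 1 := by push_cast; ring
      rw [this, hshift (t + n) i, ih t i, pow_succ]
      simp [mul_comm, mul_assoc, mul_left_comm]
  have hperiodN : ∀ t : ℝ≥0, δ (t + N) = δ t := by
    intro t
    funext i
    rw [hiter N t i, hcN i, one_mul]
  -- range δ = δ '' Icc 0 N
  have hrange : Set.range δ = δ '' Set.Icc 0 (N : ℝ≥0) := by
    apply Set.Subset.antisymm
    · rintro _ ⟨t, rfl⟩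
      have hbound : ∀ (n : ℕ) (t : ℝ≥0), t ≤ n * N → ∃ s ∈ Set.Icc 0 (N : ℝ≥0), δ t = δ s := by
        intro n
        induction n with
        | zero =>
          intro t ht
          simp only [Nat.cast_zero, zero_mul, nonpos_iff_eq_zero] at ht
          exact ⟨0, ⟨le_refl _, by exact_mod_cast Nat.zero_le N⟩, by rw [ht]⟩
        | succ n ih =>
          intro t ht
          by_cases h : t ≤ N
          · exact ⟨t, ⟨zero_le, h⟩, rfl⟩
          · push_neg at h
            have hle : (N : ℝ≥0) ≤ t := h.le
            have h1 : t - N ≤ n * N := by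
              rw [tsub_le_iff_right]
              calc t ≤ (n + 1 : ℕ) * N := ht
              _ = n * N + N := by push_cast; ring
            obtain ⟨s, hs, hδs⟩ := ih (t - N) h1
            refine ⟨s, hs, ?_⟩
            rw [← hδs, ← hperiodN (t - N), tsub_add_cancel_of_le hle]
      obtain ⟨n, hn⟩ := exists_nat_ge t
      have : t ≤ n * N := le_trans hn (by
        calc (n : ℝ≥0) = n * 1 := (mul_one _).symm
        _ ≤ n * N := by
            apply mul_le_mul_right
            exact_mod_cast hN1)
      obtain ⟨s, hs, hδs⟩ := hbound n t this
      exact ⟨s, hs, hδs.symm⟩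
    · rintro _ ⟨s, _, rfl⟩
      exact ⟨s, rfl⟩
  constructor
  · rw [hrange]
    exact (isCompact_Icc).image hδ
  · rw [hrange]
    exact (isConnected_Icc (by exact_mod_cast Nat.zero_le N)).image δ hδ.continuousOn
end

section
/- Let m₁,…,m_r be pairwise coprime integers, each at least 2, and let M be a subcontinuum of Σ such that p₀ ∈ M and η_i(M) = Σ_{m_i} for each i ∈ {1,…,r}. Then for every n ∈ ℕ and every i ∈ {1,…,r}, the map (ρ_i ∘ π_n)|_M : M → S¹ admits no lifting through e: there is no continuous h : M → ℝ with e ∘ h = (ρ_i ∘ π_n)|_M. -/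
open scoped Real NNReal

lemma eMap_add (a b : ℝ) : eMap (a + b) = eMap a * eMap b := by
  simp only [eMap, mul_add, Circle.exp_add]

lemma eMap_zero : eMap 0 = 1 := by simp [eMap]

lemma eMap_neg (a : ℝ) : eMap (-a) = (eMap a)⁻¹ := by
  simp only [eMap, mul_neg, Circle.exp_neg]

lemma eMap_pow (k : ℕ) (t : ℝ) : eMap t ^ k = eMap (k * t) := by
  induction k with
  | zero => simp [eMap_zero]
  | succ k ih =>
    rw [pow_succ, ih, ← eMap_add]
    congr 1
    push_cast
    ring

lemma eMap_int (z : ℤ) : eMap z = 1 := by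
  rw [eMap, show (2 * Real.pi * (z:ℝ)) = (z:ℝ) * (2 * Real.pi) by ring]
  exact Circle.exp_int_mul_two_pi z

lemma eMap_eq_one {t : ℝ} : eMap t = 1 ↔ ∃ z : ℤ, t = z := by
  constructor
  · intro ht
    rw [eMap, Circle.exp_eq_one] at ht
    obtain ⟨z, hz⟩ := ht
    have h2 : (0:ℝ) < 2 * Real.pi := by positivity
    refine ⟨z, mul_left_cancel₀ h2.ne' ?_⟩
    linarith [hz]
  · rintro ⟨z, rfl⟩; exact eMap_int z

lemma eMap_inj {a b : ℝ} (h : eMap a = eMap b) : ∃ z : ℤ, a = b + z := by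
  have h1 : eMap (a - b) = 1 := by
    rw [show a - b = a + -b by ring, eMap_add, eMap_neg, h, mul_inv_cancel]
  obtain ⟨z, hz⟩ := eMap_eq_one.mp h1
  exact ⟨z, by linarith⟩

lemma eMap_continuous : Continuous eMap :=
  Circle.exp.continuous.comp (by fun_prop)

lemma circle_roots_finite {k : ℕ} (hk : 0 < k) : {z : Circle | z ^ k = 1}.Finite := by
  have hp : (Polynomial.X ^ k - Polynomial.C 1 : Polynomial ℂ) ≠ 0 :=
    Polynomial.X_pow_sub_C_ne_zero hk 1
  have hfin : {w : ℂ | w ^ k = 1}.Finite := by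
    refine (Polynomial.finite_setOf_isRoot hp).subset ?_
    intro w hw
    simp only [Set.mem_setOf_eq] at hw ⊢
    simp [Polynomial.IsRoot, sub_eq_zero, hw]
  have hsub : {z : Circle | z ^ k = 1} ⊆ (fun z : Circle => (z : ℂ)) ⁻¹' {w | w ^ k = 1} := by
    intro z hz
    simp only [Set.mem_preimage, Set.mem_setOf_eq]
    calc ((z : ℂ)) ^ k = ((z ^ k : Circle) : ℂ) := (map_pow Circle.coeHom z k).symm
    _ = 1 := by rw [hz]; exact Circle.coe_one
  exact (hfin.preimage (Circle.coe_injective.injOn)).subset hsub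

/-- **Lemma 4.** For a subcontinuum `M` of `Σ` containing `p₀` and projecting onto each
solenoid factor, no map `(ρ_i ∘ π_n)|_M` can be lifted through `e : ℝ → S¹`. -/
theorem no_lift_on_subcontinuum {r : ℕ} (hr : 0 < r) (m : Fin r → ℕ)
    (hm : ∀ i, 2 ≤ m i) (hcop : ∀ i j, i ≠ j → Nat.Coprime (m i) (m j))
    (M : Set (SigmaProd m)) (hMc : IsCompact M) (hMconn : IsConnected M)
    (hp₀ : basePt m ∈ M) (honto : ∀ i, eta m i '' M = Set.univ) :
    ∀ (n : ℕ) (i : Fin r),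
      ¬ ∃ h : M → ℝ, Continuous h ∧ ∀ p : M, eMap (h p) = piProj m n p.1 i := by
  intro n i
  rintro ⟨h, hcont, hlift⟩
  set mi : ℕ := m i with hmi
  have hmi2 : 2 ≤ mi := hm i
  have hmipos : (0:ℝ) < (mi:ℝ) := by positivity
  have hmi1 : (1:ℝ) < (mi:ℝ) := by exact_mod_cast (by omega : 1 < mi)
  -- connectedness / compactness of the subtype
  have hconn : ConnectedSpace M := isConnected_iff_connectedSpace.mp hMconn
  have hcomp : CompactSpace M := isCompact_iff_compactSpace.mp hMc
  -- base point in M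
  set p₀ : M := ⟨basePt m, hp₀⟩ with hp₀def
  -- coordinate maps are continuous
  have hcoord : ∀ j : ℕ, Continuous fun p : M => (p.1.1 j i : Circle) := by
    intro j
    exact (continuous_apply i).comp ((continuous_apply j).comp
      ((continuous_subtype_val (p := fun x : ℕ → Torus r => ∀ n, fPow m (x (n+1)) = x n)).comp
        continuous_subtype_val))
  -- normalize the lift at the base point
  have hbase : eMap (h p₀) = 1 := by
    have := hlift p₀
    exact this.trans rfl
  obtain ⟨z₀, hz₀⟩ := eMap_eq_one.mp hbase
  set h₀ : M → ℝ := fun p => h p - z₀ with hh₀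
  have h₀cont : Continuous h₀ := hcont.sub continuous_const
  have h₀base : h₀ p₀ = 0 := by simp [hh₀, hz₀]
  have h₀lift : ∀ p : M, eMap (h₀ p) = p.1.1 n i := by
    intro p
    have : eMap (h p) = eMap (h₀ p) * eMap z₀ := by
      rw [← eMap_add]; congr 1; simp [hh₀]
    rw [eMap_int z₀, mul_one] at this
    rw [← this]; exact hlift p
  -- the discrete set of mi-th roots of unity
  have hTfin : {z : Circle | z ^ mi = 1}.Finite := circle_roots_finite (by omega)
  have : Finite ({z : Circle | z ^ mi = 1} : Set Circle) := hTfin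
  -- key induction
  have key : ∀ k : ℕ, ∀ p : M, eMap (h₀ p / (mi:ℝ) ^ k) = p.1.1 (n + k) i := by
    intro k
    induction k with
    | zero => intro p; simpa using h₀lift p
    | succ k ih =>
      set φ : M → Circle := fun p => p.1.1 (n + k + 1) i * eMap (-(h₀ p / (mi:ℝ) ^ (k+1)))
        with hφ
      have hφroot : ∀ p : M, φ p ^ mi = 1 := by
        intro p
        have hrel : p.1.1 (n + k + 1) i ^ mi = p.1.1 (n + k) i := congrFun (p.1.2 (n + k)) i
        have hexp : eMap (-(h₀ p / (mi:ℝ) ^ (k+1))) ^ mi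
            = (eMap (h₀ p / (mi:ℝ) ^ k))⁻¹ := by
          rw [eMap_pow, ← eMap_neg]
          congr 1
          field_simp
          ring
        rw [hφ]
        simp only
        rw [mul_pow, hrel, hexp, ih p, mul_inv_cancel]
      have hφcont : Continuous φ := by
        apply (hcoord (n + k + 1)).mul
        exact eMap_continuous.comp (h₀cont.div_const _).neg
      -- φ is constant by connectedness
      have hφconst : ∀ p : M, φ p = φ p₀ := by
        intro p
        have := hconn.toPreconnectedSpace.constant
          (f := fun q : M => (⟨φ q, hφroot q⟩ : {z : Circle | z ^ mi = 1}))
          (hφcont.subtype_mk _) (x := p) (y := p₀)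
        exact congrArg Subtype.val this
      have hφ₀ : φ p₀ = 1 := by
        have e1 : φ p₀ = 1 * eMap (-(h₀ p₀ / (mi:ℝ) ^ (k+1))) := rfl
        rw [e1, h₀base, one_mul]
        norm_num [eMap_zero]
      intro p
      have hc := hφconst p
      rw [hφ₀] at hc
      simp only [hφ, eMap_neg] at hc
      have hc2 := mul_inv_eq_one.mp hc
      rw [show n + (k+1) = n + k + 1 by ring]
      exact hc2.symm
  -- h₀ is bounded on the compact M
  obtain ⟨B, hB⟩ : ∃ B : ℝ, ∀ p : M, |h₀ p| ≤ B := by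
    obtain ⟨B, hB⟩ := (isCompact_range h₀cont).isBounded.subset_closedBall 0
    exact ⟨B, fun p => by
      have := hB (Set.mem_range_self p)
      simpa [Real.dist_eq] using this⟩
  have hB0 : 0 ≤ B := le_trans (abs_nonneg _) (hB p₀)
  -- choose k large
  obtain ⟨k, hk⟩ : ∃ k : ℕ, 2 * B < (mi:ℝ) ^ k := pow_unbounded_of_one_lt (2 * B) hmi1
  -- the solenoid point with (n+k)-th coordinate e(1/2)
  set y : Solenoid mi := ⟨fun j => eMap ((mi:ℝ) ^ (n + k) / (2 * (mi:ℝ) ^ j)), by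
    intro j
    rw [eMap_pow]
    congr 1
    have : ((mi:ℝ) ^ j) ≠ 0 := by positivity
    field_simp
    ring⟩ with hy
  obtain ⟨x, hxM, hx⟩ : ∃ x ∈ M, eta m i x = y := by
    have := honto i
    have : y ∈ eta m i '' M := by rw [this]; trivial
    obtain ⟨x, hxM, hx⟩ := this
    exact ⟨x, hxM, hx⟩
  have hxcoord : x.1 (n + k) i = eMap (1/2 : ℝ) := by
    have h1 : (eta m i x).1 (n + k) = y.1 (n + k) := congrFun (congrArg Subtype.val hx) (n + k)
    have h2 : x.1 (n + k) i = y.1 (n + k) := h1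
    rw [h2]
    show eMap ((mi:ℝ) ^ (n + k) / (2 * (mi:ℝ) ^ (n + k))) = eMap (1/2 : ℝ)
    congr 1
    have hne : ((mi:ℝ) ^ (n+k)) ≠ 0 := by positivity
    field_simp
  have hkey := key k ⟨x, hxM⟩
  rw [show ((⟨x, hxM⟩ : M) : SigmaProd m).1 (n + k) i = x.1 (n + k) i from rfl, hxcoord] at hkey
  obtain ⟨z, hz⟩ := eMap_inj hkey
  -- derive contradiction
  have hval : h₀ ⟨x, hxM⟩ = (mi:ℝ) ^ k * (1/2 + z) := by
    have hne : ((mi:ℝ) ^ k) ≠ 0 := by positivity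
    field_simp at hz ⊢
    linarith [hz]
  have habs : (mi:ℝ) ^ k * (1/2) ≤ |h₀ ⟨x, hxM⟩| := by
    rw [hval, abs_mul, abs_of_pos (by positivity : (0:ℝ) < (mi:ℝ)^k)]
    have : (1/2 : ℝ) ≤ |1/2 + (z:ℝ)| := by
      rcases le_or_gt 0 (z:ℝ) with hz'|hz'
      · rw [abs_of_pos (by linarith)]; linarith
      · have hzn : z < 0 := by exact_mod_cast hz'
        have : (z:ℝ) ≤ -1 := by exact_mod_cast (by omega : z ≤ -1)
        rw [abs_of_nonpos (by linarith)]; linarith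
    nlinarith [this]
  have := hB ⟨x, hxM⟩
  nlinarith [habs, this, hk]
end
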